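/- Let f and g be twice differentiable on (a,b) with g'(x) ≠ 0 on (a,b). If g ≥ 0 on (a,b) and f'/g' is monotone increasing on (a,b), then the function Y_{f,g}(x) = (f'(x)/g'(x))·g(x) − f(x) is monotone increasing on (a,b). -/

import Mathlib

open Set Filter Topology

lemma deriv_nonneg_of_monotoneOn {r : ℝ → ℝ} {a b x : ℝ} (hx : x ∈ Ioo a b)
    (hd : DifferentiableAt ℝ r x) (hm : MonotoneOn r (Ioo a b)) : 0 ≤ deriv r x := by
  have hslope : Tendsto (slope r x) (𝓝[>] x) (𝓝 (deriv r x)) :=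
    (hasDerivAt_iff_tendsto_slope.1 hd.hasDerivAt).mono_left
      (nhdsWithin_mono x fun y hy => ne_of_gt hy)
  refine ge_of_tendsto hslope ?_
  have hIoo : Ioo a b ∈ 𝓝[>] x :=
    nhdsWithin_le_nhds (isOpen_Ioo.mem_nhds hx)
  filter_upwards [hIoo, self_mem_nhdsWithin] with y hy hxy
  have : r x ≤ r y := hm hx hy (le_of_lt hxy)
  have hpos : 0 < y - x := sub_pos.2 hxy
  simp only [slope_def_field]
  exact div_nonneg (by linarith) hpos.le

theorem Y_monotone_of_ratio_monotone (a b : ℝ) (f g : ℝ → ℝ)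
    (hf : ∀ x ∈ Ioo a b, DifferentiableAt ℝ f x)
    (hg : ∀ x ∈ Ioo a b, DifferentiableAt ℝ g x)
    (hf' : ∀ x ∈ Ioo a b, DifferentiableAt ℝ (deriv f) x)
    (hg' : ∀ x ∈ Ioo a b, DifferentiableAt ℝ (deriv g) x)
    (hg0 : ∀ x ∈ Ioo a b, deriv g x ≠ 0)
    (hgpos : ∀ x ∈ Ioo a b, 0 ≤ g x)
    (hmono : MonotoneOn (fun x => deriv f x / deriv g x) (Ioo a b)) :
    MonotoneOn (fun x => deriv f x / deriv g x * g x - f x) (Ioo a b) := by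
  set r : ℝ → ℝ := fun x => deriv f x / deriv g x with hr
  have hrdiff : ∀ x ∈ Ioo a b, DifferentiableAt ℝ r x := fun x hx =>
    (hf' x hx).div (hg' x hx) (hg0 x hx)
  have hYdiff : ∀ x ∈ Ioo a b, DifferentiableAt ℝ (fun x => r x * g x - f x) x := fun x hx =>
    ((hrdiff x hx).mul (hg x hx)).sub (hf x hx)
  apply monotoneOn_of_deriv_nonneg (convex_Ioo a b)
  · exact fun x hx => ((hYdiff x hx).continuousAt).continuousWithinAt
  · intro x hx
    rw [interior_Ioo] at hx
    exact (hYdiff x hx).differentiableWithinAt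
  · intro x hx
    rw [interior_Ioo] at hx
    have hderiv : deriv (fun x => r x * g x - f x) x
        = deriv r x * g x + r x * deriv g x - deriv f x := by
      rw [deriv_fun_sub (show DifferentiableAt ℝ (fun y => r y * g y) x from
          (hrdiff x hx).mul (hg x hx)) (hf x hx),
        deriv_fun_mul (hrdiff x hx) (hg x hx)]
    have hcancel : r x * deriv g x = deriv f x := div_mul_cancel₀ _ (hg0 x hx)
    have hrnn : 0 ≤ deriv r x := deriv_nonneg_of_monotoneOn hx (hrdiff x hx) hmono
    rw [hderiv, hcancel]
    have := mul_nonneg hrnn (hgpos x hx)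
    linarith
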